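/- Constant cumulative posterior standard deviation under an SE-type information-gain bound: assume k(x, x) ≤ 1 for all x ∈ X and that the SE-type information-gain hypothesis holds. Then for every T ∈ ℕ₊ and every sequence x₁, …, x_T ∈ X, ∑_{t=1}^T σ(x_t; X_{t−1}) ≤ T̄_SE + (d+1) (C̃_SE/2)^{−(3d+3)/2} Γ((3d+3)/2), where Γ denotes the Euler Gamma function. -/

import Mathlib

open Matrix

noncomputable section

/-- Gram matrix `K = [k(x_i, x_j)]` of the kernel `k` on the finite family `xs`. -/
def gram {X ι : Type*} [Fintype ι] (k : X → X → ℝ) (xs : ι → X) :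
    Matrix ι ι ℝ := fun i j => k (xs i) (xs j)

/-- Kernel vector `k_t(x) = (k(x₁, x), …, k(x_t, x))`. -/
def kvec {X ι : Type*} [Fintype ι] (k : X → X → ℝ) (xs : ι → X) (x : X) :
    ι → ℝ := fun i => k (xs i) x

/-- Regularized posterior variance `σ²_{λ²}(x; xs) = k(x,x) - k_t(x)ᵀ (K + λ² I)⁻¹ k_t(x)`.
For the empty family this is `k(x,x)`. -/
def postVar {X ι : Type*} [Fintype ι] [DecidableEq ι] (k : X → X → ℝ)
    (xs : ι → X) (lam : ℝ) (x : X) : ℝ :=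
  k x x - kvec k xs x ⬝ᵥ ((gram k xs + lam ^ 2 • (1 : Matrix ι ι ℝ))⁻¹ *ᵥ kvec k xs x)

/-- Noise-free posterior standard deviation `σ(x; xs) = inf_{λ > 0} σ_{λ²}(x; xs)`. -/
def postStd {X ι : Type*} [Fintype ι] [DecidableEq ι] (k : X → X → ℝ)
    (xs : ι → X) (x : X) : ℝ :=
  ⨅ lam : {l : ℝ // 0 < l}, Real.sqrt (postVar k xs lam.1 x)

/-- Maximum information gain `γ_T(λ²) = sup_{x₁,…,x_T} (1/2) ln det (I_T + λ⁻² K_T)`,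
a value in `[0, ∞]`. -/
def mig {X : Type*} (k : X → X → ℝ) (T : ℕ) (lam : ℝ) : ENNReal :=
  ⨆ xs : Fin T → X, ENNReal.ofReal
    ((1 / 2) * Real.log ((1 + (lam ^ 2)⁻¹ • gram k xs).det))

/-- The prefix `X_{t-1} = (x₁, …, x_{t-1})` of a finite sequence (`t` is 0-indexed). -/
def pre {X : Type*} {T : ℕ} (xs : Fin T → X) (t : Fin T) : Fin t.1 → X :=
  fun i => xs ⟨i.1, i.2.trans t.2⟩

/-- Noise-free posterior mean `μ(x; xs) = k_t(x)ᵀ K⁻¹ (f(x₁), …, f(x_t))ᵀ`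
(for the empty family this is `0`). -/
def postMean {X ι : Type*} [Fintype ι] [DecidableEq ι] (k : X → X → ℝ)
    (xs : ι → X) (f : X → ℝ) (x : X) : ℝ :=
  kvec k xs x ⬝ᵥ ((gram k xs)⁻¹ *ᵥ fun i => f (xs i))

/-- Noise-free posterior standard deviation in closed form,
`σ(x; xs) = (k(x,x) - k_t(x)ᵀ K⁻¹ k_t(x))^{1/2}` (for the empty family, `k(x,x)^{1/2}`). -/
def postStdInv {X ι : Type*} [Fintype ι] [DecidableEq ι] (k : X → X → ℝ)
    (xs : ι → X) (x : X) : ℝ :=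
  Real.sqrt (k x x - kvec k xs x ⬝ᵥ ((gram k xs)⁻¹ *ᵥ kvec k xs x))

/-- The first `t` points `X_t = (x₁, …, x_t)` of an infinite sequence. -/
def prefN {X : Type*} (xseq : ℕ → X) (t : ℕ) : Fin t → X := fun i => xseq i

section Aux

variable {X : Type*} {k : X → X → ℝ}

/-- abbreviation for the regularized matrix -/
def gramA {X : Type*} {n : ℕ} (k : X → X → ℝ) (xs : Fin n → X) (lam : ℝ) :
    Matrix (Fin n) (Fin n) ℝ :=
  gram k xs + lam ^ 2 • (1 : Matrix (Fin n) (Fin n) ℝ)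

lemma gram_quad_eq {n : ℕ} (xs : Fin n → X) (c : Fin n → ℝ) :
    c ⬝ᵥ (gram k xs *ᵥ c) = ∑ i, ∑ j, c i * c j * k (xs i) (xs j) := by
  simp only [dotProduct, mulVec, _root_.gram, Finset.mul_sum]
  exact Finset.sum_congr rfl fun i _ => Finset.sum_congr rfl fun j _ => by ring

lemma gram_psd (hpsd : ∀ (n : ℕ) (xv : Fin n → X) (c : Fin n → ℝ),
      0 ≤ ∑ i, ∑ j, c i * c j * k (xv i) (xv j))
    {n : ℕ} (xs : Fin n → X) (c : Fin n → ℝ) :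
    0 ≤ c ⬝ᵥ (gram k xs *ᵥ c) := by
  rw [gram_quad_eq]; exact hpsd n xs c

lemma gram_posSemidef (hsym : ∀ x y : X, k x y = k y x)
    (hpsd : ∀ (n : ℕ) (xv : Fin n → X) (c : Fin n → ℝ),
      0 ≤ ∑ i, ∑ j, c i * c j * k (xv i) (xv j))
    {n : ℕ} (xs : Fin n → X) : (gram k xs).PosSemidef := by
  refine Matrix.PosSemidef.of_dotProduct_mulVec_nonneg ?_ fun c => ?_
  · ext i j
    simp [Matrix.conjTranspose, _root_.gram, hsym (xs i) (xs j)]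
  · simpa using gram_psd hpsd xs c

lemma gramA_posDef (hsym : ∀ x y : X, k x y = k y x)
    (hpsd : ∀ (n : ℕ) (xv : Fin n → X) (c : Fin n → ℝ),
      0 ≤ ∑ i, ∑ j, c i * c j * k (xv i) (xv j))
    {n : ℕ} (xs : Fin n → X) {lam : ℝ} (hlam : lam ≠ 0) :
    (gramA k xs lam).PosDef := by
  refine Matrix.PosDef.posSemidef_add (gram_posSemidef hsym hpsd xs) ?_
  rw [Matrix.smul_one_eq_diagonal]
  exact Matrix.PosDef.diagonal fun _ => by positivity

end Aux


section Aux2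

variable {X : Type*} {k : X → X → ℝ}

lemma quad_eq {n : ℕ} (M : Matrix (Fin n) (Fin n) ℝ) (c : Fin n → ℝ) :
    c ⬝ᵥ (M *ᵥ c) = ∑ i, ∑ j, c i * c j * M i j := by
  simp only [dotProduct, mulVec, Finset.mul_sum]
  exact Finset.sum_congr rfl fun i _ => Finset.sum_congr rfl fun j _ => by ring

lemma quad_inv_ge {n : ℕ} {A : Matrix (Fin n) (Fin n) ℝ} (hA : A.PosDef)
    (v c : Fin n → ℝ) :
    2 * (c ⬝ᵥ v) - c ⬝ᵥ (A *ᵥ c) ≤ v ⬝ᵥ (A⁻¹ *ᵥ v) := by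
  set u := A⁻¹ *ᵥ v with hu
  have hAu : A *ᵥ u = v := by
    rw [hu, Matrix.mulVec_mulVec, Matrix.mul_nonsing_inv _ hA.det_pos.ne'.isUnit,
      Matrix.one_mulVec]
  have h0 : 0 ≤ (c - u) ⬝ᵥ (A *ᵥ (c - u)) := by
    simpa using hA.posSemidef.dotProduct_mulVec_nonneg (c - u)
  have hsymA : u ⬝ᵥ (A *ᵥ c) = c ⬝ᵥ v := by
    rw [Matrix.dotProduct_mulVec]
    have : u ᵥ* A = A *ᵥ u := by
      rw [← Matrix.mulVec_transpose]
      have h := hA.isHermitian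
      rw [Matrix.IsHermitian, Matrix.conjTranspose_eq_transpose_of_trivial] at h
      rw [h]
    rw [this, hAu, dotProduct_comm]
  have hcu : c ⬝ᵥ (A *ᵥ u) = c ⬝ᵥ v := by rw [hAu]
  have huu : u ⬝ᵥ (A *ᵥ u) = u ⬝ᵥ v := by rw [hAu]
  have hvu : v ⬝ᵥ (A⁻¹ *ᵥ v) = u ⬝ᵥ v := dotProduct_comm _ _
  rw [Matrix.mulVec_sub, sub_dotProduct, dotProduct_sub,
    dotProduct_sub] at h0
  rw [hvu]
  rw [hcu, hsymA, huu] at h0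
  linarith

lemma snoc_quad (hsym : ∀ x y : X, k x y = k y x)
    (hpsd : ∀ (n : ℕ) (xv : Fin n → X) (c : Fin n → ℝ),
      0 ≤ ∑ i, ∑ j, c i * c j * k (xv i) (xv j))
    {n : ℕ} (xs : Fin n → X) (x : X) (c : Fin n → ℝ) :
    2 * (c ⬝ᵥ kvec k xs x) - c ⬝ᵥ (gram k xs *ᵥ c) ≤ k x x := by
  have h := hpsd (n + 1) (Fin.snoc xs x) (Fin.snoc c (-1))
  simp only [Fin.sum_univ_castSucc, Fin.snoc_castSucc, Fin.snoc_last] at h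
  rw [Finset.sum_add_distrib] at h
  have h1 : ∑ i, (∑ j, c i * c j * k (xs i) (xs j)) = c ⬝ᵥ (gram k xs *ᵥ c) :=
    (quad_eq _ _).symm
  have h2 : ∑ i, c i * (-1) * k (xs i) x = -(c ⬝ᵥ kvec k xs x) := by
    simp only [dotProduct, kvec, ← Finset.sum_neg_distrib]
    exact Finset.sum_congr rfl fun i _ => by ring
  have h3 : ∑ j, (-1 : ℝ) * c j * k x (xs j) = -(c ⬝ᵥ kvec k xs x) := by
    simp only [dotProduct, kvec, ← Finset.sum_neg_distrib]
    exact Finset.sum_congr rfl fun j _ => by rw [hsym x (xs j)]; ring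
  rw [h1, h2, h3] at h
  nlinarith [h]

lemma gramA_quad {n : ℕ} (xs : Fin n → X) (lam : ℝ) (u : Fin n → ℝ) :
    u ⬝ᵥ (gramA k xs lam *ᵥ u) = u ⬝ᵥ (gram k xs *ᵥ u) + lam ^ 2 * (u ⬝ᵥ u) := by
  rw [gramA, Matrix.add_mulVec, dotProduct_add, Matrix.smul_mulVec,
    Matrix.one_mulVec, dotProduct_smul, smul_eq_mul]

lemma postVar_eq {n : ℕ} (xs : Fin n → X) (lam : ℝ) (x : X) :
    postVar k xs lam x
      = k x x - kvec k xs x ⬝ᵥ ((gramA k xs lam)⁻¹ *ᵥ kvec k xs x) := rfl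

lemma dotProduct_self_nonneg' {n : ℕ} (u : Fin n → ℝ) : 0 ≤ u ⬝ᵥ u :=
  Finset.sum_nonneg fun i _ => mul_self_nonneg _

lemma postVar_nonneg (hsym : ∀ x y : X, k x y = k y x)
    (hpsd : ∀ (n : ℕ) (xv : Fin n → X) (c : Fin n → ℝ),
      0 ≤ ∑ i, ∑ j, c i * c j * k (xv i) (xv j))
    {n : ℕ} (xs : Fin n → X) {lam : ℝ} (hlam : lam ≠ 0) (x : X) :
    0 ≤ postVar k xs lam x := by
  rw [postVar_eq]
  set A := gramA k xs lam with hA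
  set v := kvec k xs x with hv
  set u := A⁻¹ *ᵥ v with hu
  have hPD := gramA_posDef hsym hpsd xs hlam
  have hAu : A *ᵥ u = v := by
    rw [hu, Matrix.mulVec_mulVec, Matrix.mul_nonsing_inv _ hPD.det_pos.ne'.isUnit,
      Matrix.one_mulVec]
  have key : v ⬝ᵥ (A⁻¹ *ᵥ v) = 2 * (u ⬝ᵥ v) - u ⬝ᵥ (A *ᵥ u) := by
    rw [hAu, ← hu, dotProduct_comm]; ring
  have h2 : u ⬝ᵥ (A *ᵥ u) = u ⬝ᵥ (gram k xs *ᵥ u) + lam ^ 2 * (u ⬝ᵥ u) :=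
    gramA_quad xs lam u
  have h3 : 2 * (u ⬝ᵥ v) - u ⬝ᵥ (gram k xs *ᵥ u) ≤ k x x := snoc_quad hsym hpsd xs x u
  have h4 : 0 ≤ u ⬝ᵥ u := dotProduct_self_nonneg' u
  nlinarith [sq_nonneg lam]

lemma postVar_le_diag (hsym : ∀ x y : X, k x y = k y x)
    (hpsd : ∀ (n : ℕ) (xv : Fin n → X) (c : Fin n → ℝ),
      0 ≤ ∑ i, ∑ j, c i * c j * k (xv i) (xv j))
    {n : ℕ} (xs : Fin n → X) {lam : ℝ} (hlam : lam ≠ 0) (x : X) :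
    postVar k xs lam x ≤ k x x := by
  rw [postVar_eq]
  have hPD := (gramA_posDef hsym hpsd xs hlam).inv
  have : 0 ≤ kvec k xs x ⬝ᵥ ((gramA k xs lam)⁻¹ *ᵥ kvec k xs x) := by
    simpa using hPD.posSemidef.dotProduct_mulVec_nonneg (kvec k xs x)
  linarith

end Aux2

section Aux3

variable {X : Type*} {k : X → X → ℝ}

instance : Nonempty {l : ℝ // 0 < l} := ⟨⟨1, one_pos⟩⟩

lemma postStd_nonneg {n : ℕ} (xs : Fin n → X) (x : X) : 0 ≤ postStd k xs x :=
  Real.iInf_nonneg fun _ => Real.sqrt_nonneg _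

lemma postStd_le_sqrt {n : ℕ} (xs : Fin n → X) (x : X) {lam : ℝ} (h : 0 < lam) :
    postStd k xs x ≤ Real.sqrt (postVar k xs lam x) :=
  ciInf_le ⟨0, by rintro y ⟨l, rfl⟩; exact Real.sqrt_nonneg _⟩ (⟨lam, h⟩ : {l : ℝ // 0 < l})

lemma postStd_le_one (hsym : ∀ x y : X, k x y = k y x)
    (hpsd : ∀ (n : ℕ) (xv : Fin n → X) (c : Fin n → ℝ),
      0 ≤ ∑ i, ∑ j, c i * c j * k (xv i) (xv j))
    (hk1 : ∀ x : X, k x x ≤ 1)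
    {n : ℕ} (xs : Fin n → X) (x : X) : postStd k xs x ≤ 1 := by
  refine (postStd_le_sqrt xs x one_pos).trans ?_
  have h1 : postVar k xs 1 x ≤ 1 := (postVar_le_diag hsym hpsd xs one_ne_zero x).trans (hk1 x)
  exact (Real.sqrt_le_sqrt h1).trans (le_of_eq Real.sqrt_one)

lemma sq_postStd_le {n : ℕ} (hsym : ∀ x y : X, k x y = k y x)
    (hpsd : ∀ (n : ℕ) (xv : Fin n → X) (c : Fin n → ℝ),
      0 ≤ ∑ i, ∑ j, c i * c j * k (xv i) (xv j))
    (xs : Fin n → X) (x : X) {lam : ℝ} (h : 0 < lam) :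
    postStd k xs x ^ 2 ≤ postVar k xs lam x := by
  have h1 := postStd_le_sqrt (k := k) xs x h
  have h2 := postStd_nonneg (k := k) xs x
  calc postStd k xs x ^ 2 ≤ Real.sqrt (postVar k xs lam x) ^ 2 := by
        exact pow_le_pow_left₀ h2 h1 2
    _ = postVar k xs lam x := Real.sq_sqrt (postVar_nonneg hsym hpsd xs h.ne' x)

lemma sum_extend_mul {n m : ℕ} {e : Fin n → Fin m} (he : Function.Injective e)
    (u : Fin n → ℝ) (g : Fin m → ℝ) :
    ∑ j, Function.extend e u 0 j * g j = ∑ i, u i * g (e i) := by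
  have hsub : ∑ j, Function.extend e u 0 j * g j
      = ∑ j ∈ Finset.univ.image e, Function.extend e u 0 j * g j := by
    refine (Finset.sum_subset (Finset.subset_univ _) fun j _ hj => ?_).symm
    have : ¬∃ i, e i = j := by
      intro ⟨i, hi⟩; exact hj (Finset.mem_image.mpr ⟨i, Finset.mem_univ i, hi⟩)
    rw [Function.extend_apply' _ _ _ this, Pi.zero_apply, zero_mul]
  rw [hsub, Finset.sum_image (fun a _ b _ h => he h)]
  exact Finset.sum_congr rfl fun i _ => by rw [he.extend_apply]

lemma postVar_mono (hsym : ∀ x y : X, k x y = k y x)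
    (hpsd : ∀ (n : ℕ) (xv : Fin n → X) (c : Fin n → ℝ),
      0 ≤ ∑ i, ∑ j, c i * c j * k (xv i) (xv j))
    {n m : ℕ} {xs' : Fin n → X} {ys : Fin m → X}
    {e : Fin n → Fin m} (he : Function.Injective e) (hco : ∀ i, ys (e i) = xs' i)
    {lam : ℝ} (hlam : lam ≠ 0) (x : X) :
    postVar k ys lam x ≤ postVar k xs' lam x := by
  rw [postVar_eq, postVar_eq]
  have key : kvec k xs' x ⬝ᵥ ((gramA k xs' lam)⁻¹ *ᵥ kvec k xs' x)
      ≤ kvec k ys x ⬝ᵥ ((gramA k ys lam)⁻¹ *ᵥ kvec k ys x) := by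
    set An := gramA k xs' lam with hAn
    set vn := kvec k xs' x with hvn
    set u := An⁻¹ *ᵥ vn with hu
    have hPDn := gramA_posDef hsym hpsd xs' hlam
    have hPDm := gramA_posDef hsym hpsd ys hlam
    have hAu : An *ᵥ u = vn := by
      rw [hu, Matrix.mulVec_mulVec, Matrix.mul_nonsing_inv _ hPDn.det_pos.ne'.isUnit,
        Matrix.one_mulVec]
    set c := Function.extend e u 0 with hc
    have h5 := quad_inv_ge hPDm (kvec k ys x) c
    have e1 : c ⬝ᵥ kvec k ys x = u ⬝ᵥ vn := by
      rw [dotProduct, dotProduct, sum_extend_mul he]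
      exact Finset.sum_congr rfl fun i _ => by rw [hvn]; simp [kvec, hco i]
    have e2 : c ⬝ᵥ (gramA k ys lam *ᵥ c) = u ⬝ᵥ (An *ᵥ u) := by
      rw [dotProduct, dotProduct, hc, sum_extend_mul he]
      refine Finset.sum_congr rfl fun i _ => ?_
      congr 1
      rw [Matrix.mulVec, Matrix.mulVec, dotProduct, dotProduct]
      have hcm : ∀ j, gramA k ys lam (e i) j * Function.extend e u 0 j
          = Function.extend e u 0 j * gramA k ys lam (e i) j := fun j => mul_comm _ _
      simp_rw [hcm]
      rw [sum_extend_mul he]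
      refine Finset.sum_congr rfl fun i' _ => ?_
      have hblock : gramA k ys lam (e i) (e i') = An i i' := by
        have h1 : gram k ys (e i) (e i') = gram k xs' i i' := by
          simp [_root_.gram, hco i, hco i']
        have h2 : (1 : Matrix (Fin m) (Fin m) ℝ) (e i) (e i')
            = (1 : Matrix (Fin n) (Fin n) ℝ) i i' := by
          by_cases hii : i = i'
          · subst hii; rw [Matrix.one_apply_eq, Matrix.one_apply_eq]
          · rw [Matrix.one_apply_ne (fun hcon => hii (he hcon)), Matrix.one_apply_ne hii]
        rw [hAn]
        show gram k ys (e i) (e i') + (lam ^ 2 • (1 : Matrix (Fin m) (Fin m) ℝ)) (e i) (e i')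
            = gram k xs' i i' + (lam ^ 2 • (1 : Matrix (Fin n) (Fin n) ℝ)) i i'
        rw [h1, Matrix.smul_apply, Matrix.smul_apply, h2]
      rw [hblock]; ring
    have e3 : vn ⬝ᵥ (An⁻¹ *ᵥ vn) = 2 * (u ⬝ᵥ vn) - u ⬝ᵥ (An *ᵥ u) := by
      rw [hAu, ← hu, dotProduct_comm]; ring
    rw [e1, e2] at h5
    rw [e3]
    have : u ⬝ᵥ vn = vn ⬝ᵥ u := dotProduct_comm _ _
    linarith
  linarith

end Aux3

section Aux4

variable {X : Type*} {k : X → X → ℝ}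

lemma det_gramA_succ (hsym : ∀ x y : X, k x y = k y x)
    (hpsd : ∀ (n : ℕ) (xv : Fin n → X) (c : Fin n → ℝ),
      0 ≤ ∑ i, ∑ j, c i * c j * k (xv i) (xv j))
    (y : ℕ → X) {lam : ℝ} (hlam : lam ≠ 0) (j : ℕ) :
    (gramA k (prefN y (j + 1)) lam).det
      = (gramA k (prefN y j) lam).det * (lam ^ 2 + postVar k (prefN y j) lam (y j)) := by
  classical
  set A := gramA k (prefN y j) lam with hA
  have hPD := gramA_posDef hsym hpsd (prefN y j) hlam
  haveI : Invertible A := A.invertibleOfIsUnitDet hPD.det_pos.ne'.isUnit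
  set B : Matrix (Fin j) (Fin 1) ℝ := fun i _ => kvec k (prefN y j) (y j) i with hB
  set C : Matrix (Fin 1) (Fin j) ℝ := fun _ i => kvec k (prefN y j) (y j) i with hC
  set D : Matrix (Fin 1) (Fin 1) ℝ := fun _ _ => k (y j) (y j) + lam ^ 2 with hD
  have hsub : (gramA k (prefN y (j + 1)) lam).submatrix finSumFinEquiv finSumFinEquiv
      = Matrix.fromBlocks A B C D := by
    ext a b
    have hone : ∀ (p q : Fin (j + 1)), (1 : Matrix (Fin (j + 1)) (Fin (j + 1)) ℝ) p q
        = if p.1 = q.1 then 1 else 0 := by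
      intro p q
      rw [Matrix.one_apply]
      congr 1
      simp [Fin.ext_iff]
    cases a with
    | inl a =>
      cases b with
      | inl b =>
        show gramA k (prefN y (j + 1)) lam _ _ = A a b
        rw [hA]
        show gram k (prefN y (j + 1)) _ _
            + (lam ^ 2 • (1 : Matrix (Fin (j + 1)) (Fin (j + 1)) ℝ)) _ _
            = gram k (prefN y j) a b + (lam ^ 2 • (1 : Matrix (Fin j) (Fin j) ℝ)) a b
        rw [Matrix.smul_apply, Matrix.smul_apply, hone]
        have h1 : (1 : Matrix (Fin j) (Fin j) ℝ) a b = if a.1 = b.1 then 1 else 0 := by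
          rw [Matrix.one_apply]; congr 1; simp [Fin.ext_iff]
        rw [h1]
        simp [_root_.gram, prefN, finSumFinEquiv_apply_left, Fin.coe_castAdd]
        split_ifs with hab <;> simp [hab]
      | inr b =>
        show gramA k (prefN y (j + 1)) lam _ _ = B a b
        rw [hB]
        show gram k (prefN y (j + 1)) _ _
            + (lam ^ 2 • (1 : Matrix (Fin (j + 1)) (Fin (j + 1)) ℝ)) _ _
            = kvec k (prefN y j) (y j) a
        rw [Matrix.smul_apply, hone]
        rw [if_neg (by simp [finSumFinEquiv_apply_left, finSumFinEquiv_apply_right]; omega)]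
        simp [_root_.gram, prefN, kvec, finSumFinEquiv_apply_left, finSumFinEquiv_apply_right,
          Fin.coe_castAdd, Fin.coe_natAdd]
    | inr a =>
      cases b with
      | inl b =>
        show gramA k (prefN y (j + 1)) lam _ _ = C a b
        rw [hC]
        show gram k (prefN y (j + 1)) _ _
            + (lam ^ 2 • (1 : Matrix (Fin (j + 1)) (Fin (j + 1)) ℝ)) _ _
            = kvec k (prefN y j) (y j) b
        rw [Matrix.smul_apply, hone]
        rw [if_neg (by simp [finSumFinEquiv_apply_left, finSumFinEquiv_apply_right]; omega)]
        simp [_root_.gram, prefN, kvec, finSumFinEquiv_apply_left, finSumFinEquiv_apply_right,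
          Fin.coe_castAdd, Fin.coe_natAdd, hsym (y j)]
      | inr b =>
        show gramA k (prefN y (j + 1)) lam _ _ = D a b
        rw [hD]
        show gram k (prefN y (j + 1)) _ _
            + (lam ^ 2 • (1 : Matrix (Fin (j + 1)) (Fin (j + 1)) ℝ)) _ _
            = k (y j) (y j) + lam ^ 2
        rw [Matrix.smul_apply, hone]
        rw [if_pos (by simp [finSumFinEquiv_apply_right])]
        simp [_root_.gram, prefN, finSumFinEquiv_apply_right, Fin.coe_natAdd]
  have hdet : (gramA k (prefN y (j + 1)) lam).det = (Matrix.fromBlocks A B C D).det := by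
    rw [← Matrix.det_submatrix_equiv_self finSumFinEquiv, hsub]
  rw [hdet, Matrix.det_fromBlocks₁₁, Matrix.invOf_eq_nonsing_inv]
  congr 1
  rw [Matrix.det_fin_one, Matrix.sub_apply, postVar_eq]
  have hcentry : (C * A⁻¹ * B) 0 0
      = kvec k (prefN y j) (y j) ⬝ᵥ (A⁻¹ *ᵥ kvec k (prefN y j) (y j)) := by
    rw [Matrix.mul_assoc, Matrix.mul_apply, hC, dotProduct]
    refine Finset.sum_congr rfl fun i _ => ?_
    congr 1
    all_goals rw [Matrix.mul_apply, hB, Matrix.mulVec, dotProduct]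
  rw [hcentry, hD]
  ring

lemma det_gramA_ge (hsym : ∀ x y : X, k x y = k y x)
    (hpsd : ∀ (n : ℕ) (xv : Fin n → X) (c : Fin n → ℝ),
      0 ≤ ∑ i, ∑ j, c i * c j * k (xv i) (xv j))
    (y : ℕ → X) {lam b : ℝ} (hlam : lam ≠ 0) (hb : 0 ≤ b) (N : ℕ)
    (hpv : ∀ j, j < N → b ≤ postVar k (prefN y j) lam (y j)) :
    (lam ^ 2 + b) ^ N ≤ (gramA k (prefN y N) lam).det := by
  induction N with
  | zero =>
    simp [Matrix.det_isEmpty]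
  | succ n ih =>
    rw [det_gramA_succ hsym hpsd y hlam n, pow_succ]
    have h1 := ih fun j hj => hpv j (hj.trans (Nat.lt_succ_self n))
    have h2 : lam ^ 2 + b ≤ lam ^ 2 + postVar k (prefN y n) lam (y n) := by
      have := hpv n (Nat.lt_succ_self n)
      linarith
    exact mul_le_mul h1 h2 (by positivity) (gramA_posDef hsym hpsd (prefN y n) hlam).det_pos.le

end Aux4

section Aux5
open MeasureTheory Set

lemma phi_hasDeriv {Ctil q : ℝ} {x : ℝ} (hx : 0 < x) :
    HasDerivAt (fun x : ℝ => x * Real.exp (-(Ctil * x ^ q)))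
      (Real.exp (-(Ctil * x ^ q)) * (1 - Ctil * (q * x ^ q))) x := by
  have h1 : HasDerivAt (fun x : ℝ => x ^ q) (q * x ^ (q - 1)) x :=
    Real.hasDerivAt_rpow_const (Or.inl hx.ne')
  have h2 := ((h1.const_mul Ctil).neg).exp
  have h3 := (hasDerivAt_id x).mul h2
  refine h3.congr_deriv ?_
  have hxq : x * x ^ (q - 1) = x ^ q := by
    nth_rewrite 1 [← Real.rpow_one x]
    rw [← Real.rpow_add hx]
    norm_num
  simp only [id_eq, Pi.neg_apply]
  rw [← hxq]
  ring

lemma phi_anti {Ctil : ℝ} (hC : 0 < Ctil) (d : ℕ) :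
    AntitoneOn (fun x : ℝ => x * Real.exp (-(Ctil * x ^ ((1:ℝ)/((d:ℝ)+1)))))
      (Set.Ici ((((d:ℝ)+1)/Ctil) ^ (d+1 : ℕ))) := by
  set q : ℝ := (1:ℝ)/((d:ℝ)+1) with hq
  set c : ℝ := ((d:ℝ)+1)/Ctil with hc
  have hd1 : (0:ℝ) < (d:ℝ) + 1 := by positivity
  have hcpos : 0 < c := by positivity
  have hMpos : 0 < c ^ (d+1 : ℕ) := by positivity
  have hMq : (c ^ (d+1 : ℕ)) ^ q = c := by
    rw [← Real.rpow_natCast c (d+1), ← Real.rpow_mul hcpos.le]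
    rw [show ((d+1 : ℕ) : ℝ) * q = 1 by push_cast [hq]; field_simp]
    exact Real.rpow_one c
  have key : ∀ x ∈ interior (Set.Ici (c ^ (d+1 : ℕ))),
      deriv (fun x : ℝ => x * Real.exp (-(Ctil * x ^ q))) x ≤ 0 := by
    intro x hx
    rw [interior_Ici, Set.mem_Ioi] at hx
    have hxpos : 0 < x := hMpos.trans hx
    rw [(phi_hasDeriv hxpos).deriv]
    have hxq : c ≤ x ^ q := by
      rw [← hMq]
      exact Real.rpow_le_rpow hMpos.le hx.le (by positivity)
    have h1 : 1 ≤ Ctil * (q * x ^ q) := by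
      have : Ctil * (q * c) = 1 := by
        rw [hq, hc]; field_simp
      calc (1:ℝ) = Ctil * (q * c) := this.symm
        _ ≤ Ctil * (q * x ^ q) := by
          have hq0 : 0 < q := by positivity
          have := mul_le_mul_of_nonneg_left hxq hq0.le
          exact mul_le_mul_of_nonneg_left this hC.le
    have := Real.exp_pos (-(Ctil * x ^ q))
    nlinarith
  refine antitoneOn_of_deriv_nonpos (convex_Ici _) ?_ ?_ key
  · intro x hx
    have hxpos : 0 < x := lt_of_lt_of_le hMpos hx
    exact (phi_hasDeriv hxpos).continuousAt.continuousWithinAt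
  · intro x hx
    rw [interior_Ici, Set.mem_Ioi] at hx
    exact (phi_hasDeriv (hMpos.trans hx)).differentiableAt.differentiableWithinAt

lemma F_anti {Ctil : ℝ} (hC : 0 < Ctil) (d : ℕ) :
    AntitoneOn (fun x : ℝ => Real.sqrt (x * Real.exp (-(Ctil * x ^ ((1:ℝ)/((d:ℝ)+1))))))
      (Set.Ici ((((d:ℝ)+1)/Ctil) ^ (d+1 : ℕ))) :=
  fun a ha b hb hab => Real.sqrt_le_sqrt (phi_anti hC d ha hb hab)

lemma F_eq {Ctil : ℝ} {d : ℕ} {x : ℝ} (hx : 0 < x) :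
    Real.sqrt (x * Real.exp (-(Ctil * x ^ ((1:ℝ)/((d:ℝ)+1)))))
      = x ^ ((1:ℝ)/2) * Real.exp (-(Ctil/2) * x ^ ((1:ℝ)/((d:ℝ)+1))) := by
  set q : ℝ := (1:ℝ)/((d:ℝ)+1)
  rw [Real.sqrt_mul hx.le]
  congr 1
  · rw [Real.sqrt_eq_rpow]
  · set t : ℝ := Ctil * x ^ q with ht
    have : Real.exp (-t) = Real.exp (-(t/2)) ^ 2 := by
      rw [sq, ← Real.exp_add]
      ring_nf
    rw [this, Real.sqrt_sq (Real.exp_pos _).le]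
    congr 1
    rw [ht]; ring

lemma integrable_F {Ctil : ℝ} (hC : 0 < Ctil) (d : ℕ) :
    MeasureTheory.IntegrableOn
      (fun x : ℝ => x ^ ((1:ℝ)/2) * Real.exp (-(Ctil/2) * x ^ ((1:ℝ)/((d:ℝ)+1))))
      (Set.Ioi (0:ℝ)) := by
  set q : ℝ := (1:ℝ)/((d:ℝ)+1) with hq
  set b : ℝ := Ctil/2 with hb
  have hb0 : 0 < b := by positivity
  set p : ℝ := (d:ℝ)+1 with hp
  have hp0 : (0:ℝ) < p := by positivity
  set s : ℝ := 3*p/2 - 1 with hs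
  have hint : IntegrableOn (fun x : ℝ => |p| * (x ^ s * Real.exp (-b * x ^ (1:ℝ))))
      (Set.Ioi (0:ℝ)) := by
    refine MeasureTheory.Integrable.const_mul ?_ _
    exact integrableOn_rpow_mul_exp_neg_mul_rpow (by rw [hs, hp]; push_cast; nlinarith [Nat.cast_nonneg (α := ℝ) d]) one_pos hb0
  have := (integrableOn_Ioi_comp_rpow_iff
    (fun x : ℝ => x ^ ((1:ℝ)/2) * Real.exp (-b * x ^ q)) (p := p) hp0.ne').mp ?_
  · exact this
  · refine hint.congr_fun (fun x hx => ?_) measurableSet_Ioi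
    rw [Set.mem_Ioi] at hx
    have hxp : (0:ℝ) < x ^ p := Real.rpow_pos_of_pos hx p
    rw [smul_eq_mul]
    have e1 : (x ^ p) ^ ((1:ℝ)/2) = x ^ (p/2) := by
      rw [← Real.rpow_mul hx.le]; ring_nf
    have e2 : (x ^ p) ^ q = x := by
      rw [← Real.rpow_mul hx.le, show p * q = 1 by rw [hp, hq]; field_simp; exact hp.symm, Real.rpow_one]
    rw [e1, e2]
    have e3 : x ^ (p - 1) * x ^ (p/2) = x ^ s := by
      rw [← Real.rpow_add hx, hs]; ring_nf
    have e4 : x ^ (1:ℝ) = x := Real.rpow_one x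
    beta_reduce
    rw [e4]
    calc |p| * (x ^ s * Real.exp (-b * x))
        = |p| * (x ^ (p-1) * x ^ (p/2) * Real.exp (-b * x)) := by rw [e3]
      _ = |p| * x ^ (p-1) * (x ^ (p/2) * Real.exp (-b * x)) := by ring

end Aux5

section Count

variable {X : Type*} [Nonempty X] {k : X → X → ℝ}

lemma count_lemma
    (hsym : ∀ x y : X, k x y = k y x)
    (hpsd : ∀ (n : ℕ) (xv : Fin n → X) (c : Fin n → ℝ),
      0 ≤ ∑ i, ∑ j, c i * c j * k (xv i) (xv j))
    {CSE lamBar : ℝ} (hCSE : 0 < CSE) (hlamBar : 0 < lamBar)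
    {T0 : ℕ} (hT0 : 2 ≤ T0) {d : ℕ}
    (hgain : ∀ lam : ℝ, 0 < lam → lam ≤ lamBar → ∀ t : ℕ, T0 ≤ t →
      mig k t lam ≤ ENNReal.ofReal (CSE * Real.log ((t : ℝ) / lam ^ 2) ^ (d + 1)))
    {Ctil : ℝ} (hCtil : Ctil = (6 * CSE) ^ (-(1 : ℝ) / ((d : ℝ) + 1)))
    {Tlam : ℕ} (hTlam : ∀ t : ℕ, Tlam ≤ t →
      (t : ℝ) * Real.exp (-(Ctil * (t : ℝ) ^ ((1 : ℝ) / ((d : ℝ) + 1)))) ≤ lamBar ^ 2)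
    {TSE : ℕ} (hT0SE : T0 ≤ TSE) (hTlamSE : Tlam ≤ TSE)
    {T : ℕ} (xs : Fin T → X) (N : ℕ) (hN : TSE ≤ N) (S : Finset (Fin T))
    (hS : ∀ t ∈ S, Real.sqrt ((N:ℝ) * Real.exp (-(Ctil * (N:ℝ) ^ ((1:ℝ)/((d:ℝ)+1)))))
      ≤ postStd k (pre xs t) (xs t)) :
    S.card < N := by
  by_contra hcon
  push_neg at hcon
  set q : ℝ := (1:ℝ)/((d:ℝ)+1) with hq
  have hCtil0 : 0 < Ctil := by
    rw [hCtil]; exact Real.rpow_pos_of_pos (by positivity) _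
  have hN0 : 0 < N := lt_of_lt_of_le (lt_of_lt_of_le two_pos hT0) (le_trans hT0SE hN)
  set lsq : ℝ := (N:ℝ) * Real.exp (-(Ctil * (N:ℝ) ^ q)) with hlsq
  have hlsq0 : 0 < lsq := by
    rw [hlsq]; positivity
  set lam : ℝ := Real.sqrt lsq with hlamdef
  have hlam0 : 0 < lam := Real.sqrt_pos.mpr hlsq0
  have hlamsq : lam ^ 2 = lsq := Real.sq_sqrt hlsq0.le
  obtain ⟨S', hSsub, hScard⟩ := Finset.exists_subset_card_eq hcon
  set emb := S'.orderIsoOfFin hScard with hemb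
  set t_ : Fin N → Fin T := fun i => (emb i : Fin T) with ht_
  have ht_mono : StrictMono t_ := fun a b hab => emb.lt_iff_lt.mpr hab
  set y : ℕ → X := fun m => if h : m < N then xs (t_ ⟨m, h⟩) else Classical.arbitrary X with hy
  -- posterior-variance lower bound along the subsequence
  have hpv : ∀ j, j < N → lsq ≤ postVar k (prefN y j) lam (y j) := by
    intro j hj
    have hyj : y j = xs (t_ ⟨j, hj⟩) := dif_pos hj
    set t := t_ ⟨j, hj⟩ with htdef
    have hmem : t ∈ S := hSsub (emb ⟨j, hj⟩).2
    have hstd := hS t hmem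
    have h2 : lsq ≤ postStd k (pre xs t) (xs t) ^ 2 := by
      calc lsq = Real.sqrt lsq ^ 2 := (Real.sq_sqrt hlsq0.le).symm
        _ ≤ postStd k (pre xs t) (xs t) ^ 2 :=
          pow_le_pow_left₀ (Real.sqrt_nonneg _) hstd 2
    have h1 : postStd k (pre xs t) (xs t) ^ 2 ≤ postVar k (pre xs t) lam (xs t) :=
      sq_postStd_le hsym hpsd _ _ hlam0
    have h3 : postVar k (pre xs t) lam (xs t) ≤ postVar k (prefN y j) lam (xs t) := by
      have hlt : ∀ m : Fin j, (t_ ⟨m.1, m.2.trans hj⟩).1 < t.1 :=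
        fun m => ht_mono (show (⟨m.1, m.2.trans hj⟩ : Fin N) < ⟨j, hj⟩ from m.2)
      refine postVar_mono hsym hpsd
        (e := fun m : Fin j => (⟨(t_ ⟨m.1, m.2.trans hj⟩).1, hlt m⟩ : Fin t.1))
        ?_ ?_ hlam0.ne' (xs t)
      · intro a b hab
        have h1 : (t_ ⟨a.1, a.2.trans hj⟩).1 = (t_ ⟨b.1, b.2.trans hj⟩).1 := by
          have := congrArg (Fin.val : Fin t.1 → ℕ) hab
          simpa using this
        have h2 : (⟨a.1, a.2.trans hj⟩ : Fin N) = ⟨b.1, b.2.trans hj⟩ :=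
          ht_mono.injective (Fin.ext h1)
        simp only [Fin.mk.injEq] at h2
        exact Fin.ext h2
      · intro m
        show xs _ = prefN y j m
        have hpref : prefN y j m = xs (t_ ⟨m.1, m.2.trans hj⟩) := by
          show y m.1 = _
          rw [hy]
          simp only [dif_pos (m.2.trans hj)]
        rw [hpref]
    rw [hyj]
    calc lsq ≤ postStd k (pre xs t) (xs t) ^ 2 := h2
      _ ≤ postVar k (pre xs t) lam (xs t) := h1
      _ ≤ postVar k (prefN y j) lam (xs t) := h3
  -- determinant lower bound
  have hdet1 : (2 * lsq) ^ N ≤ (gramA k (prefN y N) lam).det := by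
    have := det_gramA_ge hsym hpsd y hlam0.ne' hlsq0.le N hpv
    rw [hlamsq] at this
    rw [show 2 * lsq = lsq + lsq by ring]
    exact this
  have hdet2 : (2:ℝ) ^ N ≤ (1 + (lam ^ 2)⁻¹ • gram k (prefN y N)).det := by
    have hid : (1 + (lam ^ 2)⁻¹ • gram k (prefN y N))
        = (lam ^ 2)⁻¹ • gramA k (prefN y N) lam := by
      rw [gramA, smul_add, smul_smul, inv_mul_cancel₀ (by positivity : lam ^ 2 ≠ 0),
        one_smul, add_comm]
    rw [hid, Matrix.det_smul, Fintype.card_fin]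
    calc (2:ℝ) ^ N = ((lam ^ 2)⁻¹) ^ N * (2 * lsq) ^ N := by
          rw [← mul_pow, hlamsq]
          congr 1
          field_simp
        _ ≤ ((lam ^ 2)⁻¹) ^ N * (gramA k (prefN y N) lam).det :=
          mul_le_mul_of_nonneg_left hdet1 (by positivity)
  -- information-gain upper bound
  have hlamle : lam ≤ lamBar := by
    have h := hTlam N (le_trans hTlamSE hN)
    calc lam = Real.sqrt lsq := rfl
      _ ≤ Real.sqrt (lamBar ^ 2) := Real.sqrt_le_sqrt h
      _ = lamBar := Real.sqrt_sq hlamBar.le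
  have hmig2 := hgain lam hlam0 hlamle N (le_trans hT0SE hN)
  have hmig1 : ENNReal.ofReal ((N:ℝ) * Real.log 2 / 2) ≤ mig k N lam := by
    refine le_trans ?_ (le_iSup _ (prefN y N))
    apply ENNReal.ofReal_le_ofReal
    have hlogle : Real.log ((2:ℝ) ^ N) ≤
        Real.log ((1 + (lam ^ 2)⁻¹ • gram k (prefN y N)).det) :=
      Real.log_le_log (by positivity) hdet2
    rw [Real.log_pow] at hlogle
    calc (N:ℝ) * Real.log 2 / 2 = 1/2 * ((N:ℕ) * Real.log 2) := by push_cast; ring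
      _ ≤ 1/2 * Real.log ((1 + (lam ^ 2)⁻¹ • gram k (prefN y N)).det) := by
          apply mul_le_mul_of_nonneg_left _ (by norm_num)
          exact_mod_cast hlogle
  -- compute the gain bound
  have hlog : Real.log ((N:ℝ) / lam ^ 2) = Ctil * (N:ℝ) ^ q := by
    rw [hlamsq]
    have hNe : (N:ℝ) ≠ 0 := Nat.cast_ne_zero.mpr hN0.ne'
    have : (N:ℝ) / lsq = Real.exp (Ctil * (N:ℝ) ^ q) := by
      rw [hlsq, Real.exp_neg]
      field_simp
    rw [this, Real.log_exp]
  have hgb : CSE * Real.log ((N:ℝ) / lam ^ 2) ^ (d + 1) = (N:ℝ) / 6 := by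
    rw [hlog, mul_pow]
    have e1 : Ctil ^ (d + 1) = (6 * CSE)⁻¹ := by
      rw [hCtil, ← Real.rpow_natCast ((6 * CSE) ^ (-(1:ℝ)/((d:ℝ)+1))) (d+1),
        ← Real.rpow_mul (by positivity : (0:ℝ) ≤ 6 * CSE)]
      rw [show (-(1:ℝ)/((d:ℝ)+1)) * ((d+1 : ℕ) : ℝ) = -1 by
        push_cast; field_simp]
      rw [Real.rpow_neg_one]
    have e2 : ((N:ℝ) ^ q) ^ (d + 1) = (N:ℝ) := by
      rw [← Real.rpow_natCast ((N:ℝ) ^ q) (d+1), ← Real.rpow_mul (Nat.cast_nonneg N)]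
      rw [show q * ((d+1 : ℕ) : ℝ) = 1 by rw [hq]; push_cast; field_simp]
      exact Real.rpow_one _
    rw [e1, e2]
    field_simp
  rw [hgb] at hmig2
  have hfinal : (N:ℝ) * Real.log 2 / 2 ≤ (N:ℝ) / 6 := by
    have hle := le_trans hmig1 hmig2
    exact (ENNReal.ofReal_le_ofReal_iff (by positivity)).mp hle
  have hlog2 : (0.6931471803 : ℝ) < Real.log 2 := Real.log_two_gt_d9
  have hNpos : (0:ℝ) < (N:ℝ) := Nat.cast_pos.mpr hN0
  nlinarith

end Count

section Aux6
open MeasureTheory Set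

lemma integral_F {Ctil : ℝ} (hC : 0 < Ctil) (d : ℕ) :
    ∫ x in Set.Ioi (0:ℝ), x ^ ((1:ℝ)/2) * Real.exp (-(Ctil/2) * x ^ ((1:ℝ)/((d:ℝ)+1)))
      = ((d:ℝ)+1) * (Ctil/2) ^ (-(3*(d:ℝ)+3)/2) * Real.Gamma ((3*(d:ℝ)+3)/2) := by
  have hq : (0:ℝ) < (1:ℝ)/((d:ℝ)+1) := by positivity
  rw [integral_rpow_mul_exp_neg_mul_rpow hq (by norm_num) (by positivity : (0:ℝ) < Ctil/2)]
  have hd1 : ((d:ℝ)+1) ≠ 0 := by positivity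
  have e1 : ((1:ℝ)/2 + 1) / ((1:ℝ)/((d:ℝ)+1)) = (3*(d:ℝ)+3)/2 := by
    field_simp; ring
  have e2 : -((1:ℝ)/2 + 1) / ((1:ℝ)/((d:ℝ)+1)) = -(3*(d:ℝ)+3)/2 := by
    field_simp; ring
  have e3 : (1:ℝ) / ((1:ℝ)/((d:ℝ)+1)) = (d:ℝ)+1 := by
    field_simp
  rw [e1, e2, e3]
  ring

end Aux6

def Ffun (Ctil : ℝ) (d : ℕ) : ℝ → ℝ :=
  fun x => Real.sqrt (x * Real.exp (-(Ctil * x ^ ((1:ℝ)/((d:ℝ)+1)))))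

lemma Ffun_nonneg (Ctil : ℝ) (d : ℕ) (x : ℝ) : 0 ≤ Ffun Ctil d x :=
  Real.sqrt_nonneg _

/-- Constant cumulative posterior standard deviation under an SE-type
information-gain bound. -/
theorem sum_postStd_se
{X : Type*} [Nonempty X] (k : X → X → ℝ)
    (hsym : ∀ x y : X, k x y = k y x)
    (hpsd : ∀ (n : ℕ) (xv : Fin n → X) (c : Fin n → ℝ),
      0 ≤ ∑ i, ∑ j, c i * c j * k (xv i) (xv j))
    (hk1 : ∀ x : X, k x x ≤ 1)
    (CSE lamBar : ℝ) (hCSE : 0 < CSE) (hlamBar : 0 < lamBar)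
    (T0 : ℕ) (hT0 : 2 ≤ T0) (d : ℕ) (hd : 1 ≤ d)
    (hgain : ∀ lam : ℝ, 0 < lam → lam ≤ lamBar → ∀ t : ℕ, T0 ≤ t →
      mig k t lam ≤ ENNReal.ofReal (CSE * Real.log ((t : ℝ) / lam ^ 2) ^ (d + 1)))
    (Ctil : ℝ) (hCtil : Ctil = (6 * CSE) ^ (-(1 : ℝ) / ((d : ℝ) + 1)))
    (Tlam : ℕ) (hTlam : ∀ t : ℕ, Tlam ≤ t →
      (t : ℝ) * Real.exp (-(Ctil * (t : ℝ) ^ ((1 : ℝ) / ((d : ℝ) + 1)))) ≤ lamBar ^ 2)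
    (TSE : ℕ)
    (hTSE : TSE = max T0 (max Tlam
      (⌈((d : ℝ) + 1) ^ (d + 1) / Ctil ^ (d + 1)⌉₊ + 1))) :
    ∀ T : ℕ, 0 < T → ∀ xs : Fin T → X,
      ∑ t : Fin T, postStd k (pre xs t) (xs t) ≤
        (TSE : ℝ) + ((d : ℝ) + 1) * (Ctil / 2) ^ (-(3 * (d : ℝ) + 3) / 2) *
          Real.Gamma ((3 * (d : ℝ) + 3) / 2) := by
  intro T hT xs
  classical
  have hCtil0 : 0 < Ctil := by
    rw [hCtil]; exact Real.rpow_pos_of_pos (by positivity) _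
  have htail0 : 0 ≤ ((d : ℝ) + 1) * (Ctil / 2) ^ (-(3 * (d : ℝ) + 3) / 2) *
      Real.Gamma ((3 * (d : ℝ) + 3) / 2) := by
    have h1 : 0 < Real.Gamma ((3 * (d : ℝ) + 3) / 2) :=
      Real.Gamma_pos_of_pos (by positivity)
    have h2 : (0:ℝ) ≤ (Ctil / 2) ^ (-(3 * (d : ℝ) + 3) / 2) :=
      Real.rpow_nonneg (by positivity) _
    positivity
  set σf : Fin T → ℝ := fun t => postStd k (pre xs t) (xs t) with hσf
  have hσ1 : ∀ t, σf t ≤ 1 := fun t => postStd_le_one hsym hpsd hk1 _ _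
  have hT0SE : T0 ≤ TSE := by rw [hTSE]; exact le_max_left _ _
  have hTlamSE : Tlam ≤ TSE := by
    rw [hTSE]; exact le_trans (le_max_left _ _) (le_max_right _ _)
  have hceilSE : ⌈((d : ℝ) + 1) ^ (d + 1) / Ctil ^ (d + 1)⌉₊ + 1 ≤ TSE := by
    rw [hTSE]; exact le_trans (le_max_right _ _) (le_max_right _ _)
  by_cases hcase : T ≤ TSE
  · calc ∑ t : Fin T, σf t ≤ ∑ _t : Fin T, (1:ℝ) :=
          Finset.sum_le_sum (fun t _ => hσ1 t)
      _ = (T:ℝ) := by simp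
      _ ≤ (TSE:ℝ) := Nat.cast_le.mpr hcase
      _ ≤ _ := le_add_of_nonneg_right htail0
  · push_neg at hcase
    have hTSE_T : TSE ≤ T := hcase.le
    set g : Fin T → ℝ := σf ∘ (Tuple.sort σf) with hg
    have hsum : ∑ t : Fin T, σf t = ∑ j : Fin T, g j :=
      (Equiv.sum_comp (Tuple.sort σf) σf).symm
    have hgmono : Monotone g := Tuple.monotone_sort σf
    have hg1 : ∀ j, g j ≤ 1 := fun j => hσ1 _
    have hrank : ∀ j : Fin T, TSE ≤ T - j.1 → g j ≤ Ffun Ctil d ((T - j.1 : ℕ) : ℝ) := by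
      intro j hij
      by_contra hgt
      push_neg at hgt
      set N := T - j.1 with hN
      set S : Finset (Fin T) := Finset.image (⇑(Tuple.sort σf)) (Finset.Ici j) with hSdef
      have hcard : S.card = N := by
        rw [hSdef, Finset.card_image_of_injective _ (Equiv.injective _), Fin.card_Ici]
      have hbound : ∀ t ∈ S,
          Real.sqrt ((N:ℝ) * Real.exp (-(Ctil * (N:ℝ) ^ ((1:ℝ)/((d:ℝ)+1)))))
            ≤ postStd k (pre xs t) (xs t) := by
        intro t ht
        obtain ⟨j', hj', rfl⟩ := Finset.mem_image.mp ht
        have h1 : g j ≤ g j' := hgmono (Finset.mem_Ici.mp hj')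
        have h2 : Ffun Ctil d ((N:ℕ):ℝ) ≤ g j' := le_trans hgt.le h1
        exact le_trans (le_of_eq rfl) h2
      have hlt := count_lemma hsym hpsd hCSE hlamBar hT0 hgain hCtil hTlam
        hT0SE hTlamSE xs N hij S hbound
      omega
    have hstep1 : ∑ j : Fin T, g j
        ≤ ∑ j : Fin T, (if T - j.1 ≤ TSE then (1:ℝ) else Ffun Ctil d ((T - j.1 : ℕ) : ℝ)) := by
      refine Finset.sum_le_sum fun j _ => ?_
      by_cases hij : T - j.1 ≤ TSE
      · rw [if_pos hij]; exact hg1 j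
      · rw [if_neg hij]; exact hrank j (le_of_lt (lt_of_not_ge hij))
    have hstep2 : ∑ j : Fin T, (if T - j.1 ≤ TSE then (1:ℝ) else Ffun Ctil d ((T - j.1 : ℕ) : ℝ))
        = ∑ i ∈ Finset.range T, (if T - i ≤ TSE then (1:ℝ) else Ffun Ctil d ((T - i : ℕ) : ℝ)) :=
      Fin.sum_univ_eq_sum_range (fun i => if T - i ≤ TSE then (1:ℝ) else Ffun Ctil d ((T - i : ℕ) : ℝ)) T
    have hstep3 : ∑ i ∈ Finset.range T, (if T - i ≤ TSE then (1:ℝ) else Ffun Ctil d ((T - i : ℕ) : ℝ))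
        = ∑ i ∈ Finset.range T, (if i + 1 ≤ TSE then (1:ℝ) else Ffun Ctil d ((i + 1 : ℕ) : ℝ)) := by
      rw [← Finset.sum_range_reflect]
      refine Finset.sum_congr rfl fun i hi => ?_
      have hiT := Finset.mem_range.mp hi
      have : T - (T - 1 - i) = i + 1 := by omega
      rw [this]
    have hstep4a : ∀ i ∈ Finset.range T,
        (if i + 1 ≤ TSE then (1:ℝ) else Ffun Ctil d ((i + 1 : ℕ) : ℝ))
          ≤ (if i + 1 ≤ TSE then (1:ℝ) else 0)
            + (if TSE < i + 1 then Ffun Ctil d ((i + 1 : ℕ) : ℝ) else 0) := by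
      intro i _
      by_cases h1 : i + 1 ≤ TSE
      · rw [if_pos h1, if_pos h1, if_neg (by omega)]; simp
      · rw [if_neg h1, if_neg h1, if_pos (by omega)]; simp
    have hstep4 : ∑ i ∈ Finset.range T, (if i + 1 ≤ TSE then (1:ℝ) else Ffun Ctil d ((i + 1 : ℕ) : ℝ))
        ≤ (TSE:ℝ) + ∑ i ∈ Finset.Ico TSE T, Ffun Ctil d ((i + 1 : ℕ) : ℝ) := by
      refine le_trans (Finset.sum_le_sum hstep4a) ?_
      rw [Finset.sum_add_distrib]
      have hA : ∑ i ∈ Finset.range T, (if i + 1 ≤ TSE then (1:ℝ) else 0) ≤ (TSE:ℝ) := by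
        rw [← Finset.sum_filter]
        have hsub : (Finset.range T).filter (fun i => i + 1 ≤ TSE) ⊆ Finset.range TSE := by
          intro i hi
          simp only [Finset.mem_filter, Finset.mem_range] at hi ⊢
          omega
        have hcardle := Finset.card_le_card hsub
        rw [Finset.card_range] at hcardle
        calc ∑ _i ∈ (Finset.range T).filter (fun i => i + 1 ≤ TSE), (1:ℝ)
            = ((Finset.range T).filter (fun i => i + 1 ≤ TSE)).card := by simp
          _ ≤ (TSE:ℝ) := by exact_mod_cast hcardle
      have hB : ∑ i ∈ Finset.range T, (if TSE < i + 1 then Ffun Ctil d ((i + 1 : ℕ) : ℝ) else 0)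
          = ∑ i ∈ Finset.Ico TSE T, Ffun Ctil d ((i + 1 : ℕ) : ℝ) := by
        rw [← Finset.sum_filter]
        congr 1
        ext i
        simp only [Finset.mem_filter, Finset.mem_range, Finset.mem_Ico]
        omega
      rw [hB]
      exact add_le_add hA le_rfl
    -- the antitone comparison with the integral
    have hMle : ((((d:ℝ)+1)/Ctil) ^ (d+1 : ℕ)) ≤ (TSE:ℝ) := by
      have h1 : ((d : ℝ) + 1) ^ (d + 1) / Ctil ^ (d + 1)
          ≤ (⌈((d : ℝ) + 1) ^ (d + 1) / Ctil ^ (d + 1)⌉₊ : ℝ) := Nat.le_ceil _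
      have h2 : ((⌈((d : ℝ) + 1) ^ (d + 1) / Ctil ^ (d + 1)⌉₊ : ℝ)) ≤ (TSE:ℝ) := by
        exact_mod_cast le_trans (Nat.le_succ _) hceilSE
      rw [div_pow]
      linarith
    have hanti : AntitoneOn (Ffun Ctil d) (Set.Icc (TSE:ℝ) (T:ℝ)) := by
      refine (F_anti hCtil0 d).mono ?_
      intro x hx
      exact le_trans hMle hx.1
    have hstep5 : ∑ i ∈ Finset.Ico TSE T, Ffun Ctil d ((i + 1 : ℕ) : ℝ)
        ≤ ∫ x in (TSE:ℝ)..(T:ℝ), Ffun Ctil d x :=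
      AntitoneOn.sum_le_integral_Ico hTSE_T hanti
    have hFion : MeasureTheory.IntegrableOn (Ffun Ctil d) (Set.Ioi (0:ℝ)) := by
      refine (integrable_F hCtil0 d).congr_fun ?_ measurableSet_Ioi
      intro x hx
      exact (F_eq (Set.mem_Ioi.mp hx)).symm
    have hstep6 : ∫ x in (TSE:ℝ)..(T:ℝ), Ffun Ctil d x
        ≤ ((d : ℝ) + 1) * (Ctil / 2) ^ (-(3 * (d : ℝ) + 3) / 2) *
          Real.Gamma ((3 * (d : ℝ) + 3) / 2) := by
      rw [intervalIntegral.integral_of_le (by exact_mod_cast hTSE_T)]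
      have hmono : ∫ x in Set.Ioc (TSE:ℝ) (T:ℝ), Ffun Ctil d x
          ≤ ∫ x in Set.Ioi (0:ℝ), Ffun Ctil d x := by
        refine MeasureTheory.setIntegral_mono_set hFion
          (MeasureTheory.ae_of_all _ (fun x => Ffun_nonneg Ctil d x)) ?_
        refine HasSubset.Subset.eventuallyLE ?_
        intro x hx
        exact lt_of_le_of_lt (Nat.cast_nonneg TSE) hx.1
      refine le_trans hmono ?_
      have heq : ∫ x in Set.Ioi (0:ℝ), Ffun Ctil d x
          = ∫ x in Set.Ioi (0:ℝ), x ^ ((1:ℝ)/2) * Real.exp (-(Ctil/2) * x ^ ((1:ℝ)/((d:ℝ)+1))) := by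
        refine MeasureTheory.setIntegral_congr_fun measurableSet_Ioi ?_
        intro x hx
        exact F_eq (Set.mem_Ioi.mp hx)
      rw [heq, integral_F hCtil0 d]
    calc ∑ t : Fin T, σf t = ∑ j : Fin T, g j := hsum
      _ ≤ _ := hstep1
      _ = _ := hstep2
      _ = _ := hstep3
      _ ≤ (TSE:ℝ) + ∑ i ∈ Finset.Ico TSE T, Ffun Ctil d ((i + 1 : ℕ) : ℝ) := hstep4
      _ ≤ (TSE:ℝ) + ∫ x in (TSE:ℝ)..(T:ℝ), Ffun Ctil d x := add_le_add le_rfl hstep5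
      _ ≤ _ := add_le_add le_rfl hstep6
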